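/- Every circle-center set contains an isosceles triangle whose vertex angle is strictly between π/6 and 5π/6 in measure: if S ⊆ ℝ² is not contained in any affine line and contains its circle centers, then there exist non-collinear points A, B, C ∈ S with dist(C,A) = dist(C,B) and π/6 < ∠ACB < 5π/6. -/

import Mathlib

open Real EuclideanGeometry

/-- A set in the Euclidean plane contains its circle centers if, whenever it contains
three non-collinear points, it contains the point equidistant from all three
(the circumcenter of the triangle they form). -/
def ContainsCircleCenters (S : Set (EuclideanSpace ℝ (Fin 2))) : Prop :=
  ∀ A ∈ S, ∀ B ∈ S, ∀ C ∈ S,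
    ¬ Collinear ℝ ({A, B, C} : Set (EuclideanSpace ℝ (Fin 2))) →
    ∀ O : EuclideanSpace ℝ (Fin 2),
      dist O A = dist O B → dist O A = dist O C → O ∈ S

noncomputable section AuxCCS

instance factFinrankCCS : Fact (Module.finrank ℝ (EuclideanSpace ℝ (Fin 2)) = 2) :=
  ⟨finrank_euclideanSpace_fin⟩

instance orientedCCS : Module.Oriented ℝ (EuclideanSpace ℝ (Fin 2)) (Fin 2) :=
  ⟨Module.Basis.orientation (EuclideanSpace.basisFun (Fin 2) ℝ).toBasis⟩

/-- The goal predicate. -/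
def IsoGoalCCS (S : Set (EuclideanSpace ℝ (Fin 2))) : Prop :=
  ∃ A ∈ S, ∃ B ∈ S, ∃ C ∈ S,
    ¬ Collinear ℝ ({A, B, C} : Set (EuclideanSpace ℝ (Fin 2))) ∧
    dist C A = dist C B ∧
    π / 6 < EuclideanGeometry.angle A C B ∧ EuclideanGeometry.angle A C B < 5 * π / 6

lemma two_zsmul_eq_coe_CCS (φ : Real.Angle) :
    (2 : ℤ) • φ = ((2 * φ.toReal : ℝ) : Real.Angle) := by
  conv_lhs => rw [← φ.coe_toReal]
  rw [← Real.Angle.intCast_mul_eq_zsmul]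
  norm_num

lemma abs_toReal_two_zsmul_small_CCS (φ : Real.Angle) (h : |φ.toReal| < π / 2) :
    |((2 : ℤ) • φ).toReal| = 2 * |φ.toReal| := by
  obtain ⟨h1, h2⟩ := abs_lt.mp h
  rw [two_zsmul_eq_coe_CCS,
    Real.Angle.toReal_coe_eq_self_iff.mpr ⟨by linarith, by linarith⟩, abs_mul, abs_two]

lemma abs_toReal_two_zsmul_large_CCS (φ : Real.Angle) (h : π / 2 < |φ.toReal|) :
    |((2 : ℤ) • φ).toReal| = 2 * π - 2 * |φ.toReal| := by
  have hlt := φ.neg_pi_lt_toReal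
  have hle := φ.toReal_le_pi
  rcases le_or_gt 0 φ.toReal with hs | hs
  · rw [abs_of_nonneg hs] at h ⊢
    have he : ((2 * φ.toReal : ℝ) : Real.Angle) = ((2 * φ.toReal - 2 * π : ℝ) : Real.Angle) := by
      rw [Real.Angle.angle_eq_iff_two_pi_dvd_sub]
      exact ⟨1, by push_cast; ring⟩
    rw [two_zsmul_eq_coe_CCS, he,
      Real.Angle.toReal_coe_eq_self_iff.mpr ⟨by linarith, by linarith [Real.pi_pos]⟩,
      abs_of_nonpos (by linarith)]
    ring
  · rw [abs_of_neg hs] at h ⊢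
    have he : ((2 * φ.toReal : ℝ) : Real.Angle) = ((2 * φ.toReal + 2 * π : ℝ) : Real.Angle) := by
      rw [Real.Angle.angle_eq_iff_two_pi_dvd_sub]
      exact ⟨-1, by push_cast; ring⟩
    rw [two_zsmul_eq_coe_CCS, he,
      Real.Angle.toReal_coe_eq_self_iff.mpr ⟨by linarith, by linarith⟩,
      abs_of_nonneg (by linarith)]
    ring

lemma noncollinear_of_angle_CCS {X O Y : EuclideanSpace ℝ (Fin 2)} (hX : X ≠ O) (hY : Y ≠ O)
    (h0 : EuclideanGeometry.angle X O Y ≠ 0) (hpi : EuclideanGeometry.angle X O Y ≠ π) :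
    ¬ Collinear ℝ ({X, Y, O} : Set (EuclideanSpace ℝ (Fin 2))) := by
  rw [Set.pair_comm Y O, collinear_iff_eq_or_eq_or_angle_eq_zero_or_angle_eq_pi]
  push_neg
  exact ⟨hX, hY, h0, hpi⟩

lemma exists_center_CCS {A B C : EuclideanSpace ℝ (Fin 2)}
    (h : ¬ Collinear ℝ ({A, B, C} : Set (EuclideanSpace ℝ (Fin 2)))) :
    ∃ O : EuclideanSpace ℝ (Fin 2), dist O A = dist O B ∧ dist O A = dist O C ∧
      ∡ A O B = (2 : ℤ) • ∡ A C B := by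
  have hCA : C ≠ A := by
    rintro rfl
    exact h (by simpa [Set.insert_comm, Set.pair_comm] using collinear_pair ℝ C B)
  have hCB : C ≠ B := by
    rintro rfl
    exact h (by simpa [Set.insert_comm, Set.pair_comm] using collinear_pair ℝ A C)
  have hai : AffineIndependent ℝ ![A, B, C] := affineIndependent_iff_not_collinear_set.mpr h
  let T : Affine.Simplex ℝ (EuclideanSpace ℝ (Fin 2)) 2 := ⟨![A, B, C], hai⟩
  have hA : A ∈ T.circumsphere := T.mem_circumsphere 0
  have hB : B ∈ T.circumsphere := T.mem_circumsphere 1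
  have hC : C ∈ T.circumsphere := T.mem_circumsphere 2
  refine ⟨T.circumsphere.center, ?_, ?_, ?_⟩
  · rw [dist_comm _ A, dist_comm _ B, EuclideanGeometry.mem_sphere.mp hA,
      EuclideanGeometry.mem_sphere.mp hB]
  · rw [dist_comm _ A, dist_comm _ C, EuclideanGeometry.mem_sphere.mp hA,
      EuclideanGeometry.mem_sphere.mp hC]
  · exact EuclideanGeometry.Sphere.oangle_center_eq_two_zsmul_oangle hA hC hB hCA hCB

lemma loop_CCS (S : Set (EuclideanSpace ℝ (Fin 2))) (hcc : ContainsCircleCenters S) :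
    ∀ n : ℕ, ∀ A B C : EuclideanSpace ℝ (Fin 2), A ∈ S → B ∈ S → C ∈ S →
      ¬ Collinear ℝ ({A, B, C} : Set (EuclideanSpace ℝ (Fin 2))) →
      dist C A = dist C B →
      EuclideanGeometry.angle A C B < 5 * π / 6 →
      π / 6 < 2 ^ n * EuclideanGeometry.angle A C B →
      IsoGoalCCS S := by
  intro n
  induction n with
  | zero =>
    intro A B C hA hB hC hnc hiso hub hlb
    exact ⟨A, hA, B, hB, C, hC, hnc, hiso, by simpa using hlb, hub⟩
  | succ n ih =>
    intro A B C hA hB hC hnc hiso hub hlb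
    by_cases hbig : π / 6 < EuclideanGeometry.angle A C B
    · exact ⟨A, hA, B, hB, C, hC, hnc, hiso, hbig, hub⟩
    push_neg at hbig
    obtain ⟨O, hOAB, hOAC, hoang⟩ := exists_center_CCS hnc
    have hOS : O ∈ S := hcc A hA B hB C hC hnc O hOAB hOAC
    have hAB : A ≠ B := by
      rintro rfl
      exact hnc (by simpa using collinear_pair ℝ A C)
    have hAC : A ≠ C := by
      rintro rfl
      exact hnc (by simpa [Set.insert_comm, Set.pair_comm] using collinear_pair ℝ A B)
    have hBC : B ≠ C := by
      rintro rfl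
      exact hnc (by simpa [Set.insert_comm, Set.pair_comm] using collinear_pair ℝ A B)
    have hOA : A ≠ O := by
      rintro rfl
      rw [dist_self] at hOAB
      exact hAB (dist_eq_zero.mp hOAB.symm)
    have hOB : B ≠ O := by
      rintro rfl
      rw [dist_self] at hOAB
      exact hAB (dist_eq_zero.mp hOAB).symm
    have hpos : 0 < EuclideanGeometry.angle A C B := by
      rcases (EuclideanGeometry.angle_nonneg A C B).lt_or_eq with h | h
      · exact h
      · exfalso
        rw [← h, mul_zero] at hlb
        linarith [Real.pi_pos]
    have hangC : EuclideanGeometry.angle A C B = |(∡ A C B).toReal| :=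
      EuclideanGeometry.angle_eq_abs_oangle_toReal hAC hBC
    have hangO : EuclideanGeometry.angle A O B = 2 * EuclideanGeometry.angle A C B := by
      rw [EuclideanGeometry.angle_eq_abs_oangle_toReal hOA hOB, hoang,
        abs_toReal_two_zsmul_small_CCS _ (by rw [← hangC]; linarith [Real.pi_pos]), ← hangC]
    have hnc' : ¬ Collinear ℝ ({A, B, O} : Set (EuclideanSpace ℝ (Fin 2))) :=
      noncollinear_of_angle_CCS hOA hOB (by rw [hangO]; positivity)
        (by rw [hangO]; intro hcon; nlinarith [Real.pi_pos])
    apply ih A B O hA hB hOS hnc' hOAB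
    · rw [hangO]; linarith [Real.pi_pos]
    · rw [hangO]
      have : (2 : ℝ) ^ n * (2 * EuclideanGeometry.angle A C B)
          = 2 ^ (n + 1) * EuclideanGeometry.angle A C B := by ring
      rw [this]
      exact hlb

lemma fromIsoSmall_CCS (S : Set (EuclideanSpace ℝ (Fin 2))) (hcc : ContainsCircleCenters S)
    {A B C : EuclideanSpace ℝ (Fin 2)} (hA : A ∈ S) (hB : B ∈ S) (hC : C ∈ S)
    (hnc : ¬ Collinear ℝ ({A, B, C} : Set (EuclideanSpace ℝ (Fin 2))))
    (hiso : dist C A = dist C B)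
    (hpos : 0 < EuclideanGeometry.angle A C B)
    (hub : EuclideanGeometry.angle A C B < 5 * π / 6) :
    IsoGoalCCS S := by
  obtain ⟨n, hn⟩ := pow_unbounded_of_one_lt ((π / 6) / EuclideanGeometry.angle A C B)
    (one_lt_two (α := ℝ))
  exact loop_CCS S hcc n A B C hA hB hC hnc hiso hub ((div_lt_iff₀ hpos).mp hn)

lemma angle_pos_lt_pi_CCS {A B C : EuclideanSpace ℝ (Fin 2)}
    (hnc : ¬ Collinear ℝ ({A, B, C} : Set (EuclideanSpace ℝ (Fin 2)))) :
    0 < EuclideanGeometry.angle A C B ∧ EuclideanGeometry.angle A C B < π := by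
  have hnc2 : ¬ Collinear ℝ ({A, C, B} : Set (EuclideanSpace ℝ (Fin 2))) := by
    rwa [Set.pair_comm C B]
  rw [collinear_iff_eq_or_eq_or_angle_eq_zero_or_angle_eq_pi] at hnc2
  push_neg at hnc2
  obtain ⟨-, -, h0, hpi⟩ := hnc2
  exact ⟨(EuclideanGeometry.angle_nonneg A C B).lt_of_ne (Ne.symm h0),
    (EuclideanGeometry.angle_le_pi A C B).lt_of_ne hpi⟩

lemma fromIso_CCS (S : Set (EuclideanSpace ℝ (Fin 2))) (hcc : ContainsCircleCenters S)
    {A B C : EuclideanSpace ℝ (Fin 2)} (hA : A ∈ S) (hB : B ∈ S) (hC : C ∈ S)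
    (hnc : ¬ Collinear ℝ ({A, B, C} : Set (EuclideanSpace ℝ (Fin 2))))
    (hiso : dist C A = dist C B) :
    IsoGoalCCS S := by
  obtain ⟨hpos, hlt⟩ := angle_pos_lt_pi_CCS hnc
  by_cases hub : EuclideanGeometry.angle A C B < 5 * π / 6
  · exact fromIsoSmall_CCS S hcc hA hB hC hnc hiso hpos hub
  push_neg at hub
  obtain ⟨O, hOAB, hOAC, hoang⟩ := exists_center_CCS hnc
  have hOS : O ∈ S := hcc A hA B hB C hC hnc O hOAB hOAC
  have hAB : A ≠ B := by
    rintro rfl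
    exact hnc (by simpa using collinear_pair ℝ A C)
  have hAC : A ≠ C := by
    rintro rfl
    exact hnc (by simpa [Set.insert_comm, Set.pair_comm] using collinear_pair ℝ A B)
  have hBC : B ≠ C := by
    rintro rfl
    exact hnc (by simpa [Set.insert_comm, Set.pair_comm] using collinear_pair ℝ A B)
  have hOA : A ≠ O := by
    rintro rfl
    rw [dist_self] at hOAB
    exact hAB (dist_eq_zero.mp hOAB.symm)
  have hOB : B ≠ O := by
    rintro rfl
    rw [dist_self] at hOAB
    exact hAB (dist_eq_zero.mp hOAB).symm
  have hangC : EuclideanGeometry.angle A C B = |(∡ A C B).toReal| :=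
    EuclideanGeometry.angle_eq_abs_oangle_toReal hAC hBC
  have hangO : EuclideanGeometry.angle A O B = 2 * π - 2 * EuclideanGeometry.angle A C B := by
    rw [EuclideanGeometry.angle_eq_abs_oangle_toReal hOA hOB, hoang,
      abs_toReal_two_zsmul_large_CCS _ (by rw [← hangC]; linarith [Real.pi_pos]), ← hangC]
  have hnc' : ¬ Collinear ℝ ({A, B, O} : Set (EuclideanSpace ℝ (Fin 2))) :=
    noncollinear_of_angle_CCS hOA hOB (by rw [hangO]; intro hcon; linarith)
      (by rw [hangO]; intro hcon; nlinarith [Real.pi_pos])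
  exact fromIsoSmall_CCS S hcc hA hB hOS hnc' hOAB
    (by rw [hangO]; linarith) (by rw [hangO]; linarith [Real.pi_pos])

lemma exists_noncollinear_triple_CCS {S : Set (EuclideanSpace ℝ (Fin 2))}
    (hline : ¬ Collinear ℝ S) :
    ∃ A ∈ S, ∃ B ∈ S, ∃ C ∈ S,
      ¬ Collinear ℝ ({A, B, C} : Set (EuclideanSpace ℝ (Fin 2))) := by
  by_contra h
  push_neg at h
  apply hline
  rcases S.eq_empty_or_nonempty with rfl | ⟨p₀, hp₀⟩
  · exact collinear_empty ℝ _
  by_cases hsub : ∀ p ∈ S, p = p₀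
  · apply Collinear.subset (s₂ := {p₀}) _ (collinear_singleton ℝ p₀)
    intro x hx
    simp [hsub x hx]
  push_neg at hsub
  obtain ⟨p₁, hp₁, hne⟩ := hsub
  rw [collinear_iff_of_mem hp₀]
  refine ⟨p₁ -ᵥ p₀, fun p hp => ?_⟩
  have hcol := h p₀ hp₀ p₁ hp₁ p hp
  have hmem : p ∈ line[ℝ, p₀, p₁] :=
    hcol.mem_affineSpan_of_mem_of_ne (by simp) (by simp) (by simp) (Ne.symm hne)
  have hmem' : (p -ᵥ p₀) +ᵥ p₀ ∈ line[ℝ, p₀, p₁] := by rwa [vsub_vadd]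
  obtain ⟨r, hr⟩ := vadd_left_mem_affineSpan_pair.mp hmem'
  exact ⟨r, by rw [hr, vsub_vadd]⟩

end AuxCCS

/-- Every circle-center set contains an isosceles triangle whose vertex angle is
strictly between π/6 and 5π/6. -/
theorem circle_center_set_isosceles_vertex_angle (S : Set (EuclideanSpace ℝ (Fin 2)))
    (hline : ¬ Collinear ℝ S) (hcc : ContainsCircleCenters S) :
    ∃ A ∈ S, ∃ B ∈ S, ∃ C ∈ S,
      ¬ Collinear ℝ ({A, B, C} : Set (EuclideanSpace ℝ (Fin 2))) ∧
      dist C A = dist C B ∧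
      π / 6 < EuclideanGeometry.angle A C B ∧ EuclideanGeometry.angle A C B < 5 * π / 6 := by
  obtain ⟨A, hA, B, hB, C, hC, hnc⟩ := exists_noncollinear_triple_CCS hline
  obtain ⟨O, hOAB, hOAC, -⟩ := exists_center_CCS hnc
  have hOS : O ∈ S := hcc A hA B hB C hC hnc O hOAB hOAC
  have hAB : A ≠ B := by
    rintro rfl
    exact hnc (by simpa using collinear_pair ℝ A C)
  have hOA : A ≠ O := by
    rintro rfl
    rw [dist_self] at hOAB
    exact hAB (dist_eq_zero.mp hOAB.symm)
  have goal : IsoGoalCCS S := by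
    by_cases h1 : Collinear ℝ ({A, B, O} : Set (EuclideanSpace ℝ (Fin 2)))
    · by_cases h2 : Collinear ℝ ({A, C, O} : Set (EuclideanSpace ℝ (Fin 2)))
      · exfalso
        have hB' : B ∈ line[ℝ, A, O] :=
          h1.mem_affineSpan_of_mem_of_ne (by simp) (by simp) (by simp) (Ne.symm hOA).symm
        have hC' : C ∈ line[ℝ, A, O] :=
          h2.mem_affineSpan_of_mem_of_ne (by simp) (by simp) (by simp) (Ne.symm hOA).symm
        have hcol : Collinear ℝ ({B, C, A, O} : Set (EuclideanSpace ℝ (Fin 2))) :=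
          collinear_insert_insert_of_mem_affineSpan_pair hB' hC'
        apply hnc
        apply hcol.subset
        intro x hx
        simp only [Set.mem_insert_iff, Set.mem_singleton_iff] at hx ⊢
        tauto
      · exact fromIso_CCS S hcc hA hC hOS h2 hOAC
    · exact fromIso_CCS S hcc hA hB hOS h1 hOAB
  exact goal
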